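/- Let (u_k), (v_k) be square-summable complex sequences and (δ_k^±) complex numbers with Re(δ_k⁺) ≥ ω > 0 and Re(δ_k⁻) ≤ -ω for all k, and suppose Σ_k (|u_k|² + |e^{δ_k⁺ T}|² |v_k|²) ≤ C ‖y₀‖² for some constant C. Then the function p(t) with Fourier coefficients h_k(t) = u_k e^{δ_k⁻ t} + v_k e^{δ_k⁺ t} satisfies the turnpike inequality ‖p(t)‖ ≤ (e^{-ωt} + e^{-ω(T-t)}) · 2√C · ‖y₀‖ for all t ∈ [0,T]. -/

import Mathlib

theorem turnpike_inequality_for_p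
    {X : Type*} [NormedAddCommGroup X] [InnerProductSpace ℂ X] [CompleteSpace X]
    {ι : Type*} (φ : HilbertBasis ι ℂ X)
    (ω : ℝ) (hω : 0 < ω) (T : ℝ) (hT : 0 < T)
    (δp δm : ι → ℂ) (hδp : ∀ k, ω ≤ (δp k).re) (hδm : ∀ k, (δm k).re ≤ -ω)
    (u v : ι → ℂ)
    (p : ℝ → X)
    (hp : ∀ t : ℝ, ∀ k, φ.repr (p t) k =
      u k * Complex.exp (δm k * t) + v k * Complex.exp (δp k * t))
    (C : ℝ) (y0 : X)
    (hsummable : Summable fun k =>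
      ‖u k‖ ^ 2 + ‖Complex.exp (δp k * T)‖ ^ 2 * ‖v k‖ ^ 2)
    (hsum : (∑' k, (‖u k‖ ^ 2 + ‖Complex.exp (δp k * T)‖ ^ 2 * ‖v k‖ ^ 2)) ≤
      C * ‖y0‖ ^ 2) :
    ∀ t ∈ Set.Icc (0:ℝ) T,
      ‖p t‖ ≤ (Real.exp (-ω * t) + Real.exp (-ω * (T - t))) *
        (2 * Real.sqrt C) * ‖y0‖ := by
  intro t ht
  obtain ⟨ht0, htT⟩ := ht
  obtain ⟨a, ha⟩ : ∃ a, a = Real.exp (-ω * t) := ⟨_, rfl⟩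
  obtain ⟨b, hb⟩ : ∃ b, b = Real.exp (-ω * (T - t)) := ⟨_, rfl⟩
  rw [← ha, ← hb]
  have ha0 : 0 < a := by rw [ha]; exact Real.exp_pos _
  have hb0 : 0 < b := by rw [hb]; exact Real.exp_pos _
  obtain ⟨m, hm⟩ : ∃ m, m = max a b := ⟨_, rfl⟩
  have hm0 : 0 < m := hm ▸ lt_max_of_lt_left ha0
  have hmab : m ≤ a + b := hm ▸ max_le (by linarith) (by linarith)
  -- pointwise bound on coefficients
  have key : ∀ k, ‖φ.repr (p t) k‖ ^ 2 ≤
      2 * m ^ 2 * (‖u k‖ ^ 2 + ‖Complex.exp (δp k * T)‖ ^ 2 * ‖v k‖ ^ 2) := by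
    intro k
    have hre1 : (δm k * (t:ℂ)).re = (δm k).re * t := by simp [Complex.mul_re]
    have hre2 : (δp k * (t:ℂ)).re = (δp k).re * t := by simp [Complex.mul_re]
    have hre3 : (δp k * (T:ℂ)).re = (δp k).re * T := by simp [Complex.mul_re]
    have h1 : ‖u k * Complex.exp (δm k * t)‖ ≤ a * ‖u k‖ := by
      rw [norm_mul, Complex.norm_exp, hre1, mul_comm]
      have : Real.exp ((δm k).re * t) ≤ a := by
        rw [ha]
        apply Real.exp_le_exp.2
        nlinarith [hδm k]
      nlinarith [norm_nonneg (u k), Real.exp_pos ((δm k).re * t)]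
    have h2 : ‖v k * Complex.exp (δp k * t)‖ ≤ b * (‖Complex.exp (δp k * T)‖ * ‖v k‖) := by
      rw [norm_mul, Complex.norm_exp, hre2,
        Complex.norm_exp, hre3]
      have : Real.exp ((δp k).re * t) ≤ b * Real.exp ((δp k).re * T) := by
        rw [hb, ← Real.exp_add]
        apply Real.exp_le_exp.2
        nlinarith [hδp k]
      nlinarith [norm_nonneg (v k), Real.exp_pos ((δp k).re * t)]
    have htri : ‖φ.repr (p t) k‖ ≤ a * ‖u k‖ + b * (‖Complex.exp (δp k * T)‖ * ‖v k‖) := by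
      rw [hp t k]
      exact le_trans (norm_add_le _ _) (add_le_add h1 h2)
    have hma : a ≤ m := hm ▸ le_max_left _ _
    have hmb : b ≤ m := hm ▸ le_max_right _ _
    obtain ⟨A, hA⟩ : ∃ A, A = a * ‖u k‖ := ⟨_, rfl⟩
    obtain ⟨B, hB⟩ : ∃ B, B = b * (‖Complex.exp (δp k * T)‖ * ‖v k‖) := ⟨_, rfl⟩
    have hA0 : 0 ≤ A := by rw [hA]; positivity
    have hB0 : 0 ≤ B := by rw [hB]; positivity
    have hs : ‖φ.repr (p t) k‖ ^ 2 ≤ (A + B) ^ 2 :=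
      pow_le_pow_left₀ (norm_nonneg _) (by rw [hA, hB]; exact htri) 2
    have hAB : (A + B) ^ 2 ≤ 2 * A ^ 2 + 2 * B ^ 2 := by nlinarith [sq_nonneg (A - B)]
    have ham : a ^ 2 ≤ m ^ 2 := pow_le_pow_left₀ ha0.le hma 2
    have hbm : b ^ 2 ≤ m ^ 2 := pow_le_pow_left₀ hb0.le hmb 2
    have hA2 : A ^ 2 ≤ m ^ 2 * ‖u k‖ ^ 2 := by
      rw [hA, mul_pow]
      exact mul_le_mul_of_nonneg_right ham (sq_nonneg _)
    have hB2 : B ^ 2 ≤ m ^ 2 * (‖Complex.exp (δp k * T)‖ ^ 2 * ‖v k‖ ^ 2) := by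
      rw [hB, mul_pow, mul_pow]
      exact mul_le_mul_of_nonneg_right hbm (by positivity)
    linarith [hs, hAB, hA2, hB2]
  have hsumlhs : Summable fun k => ‖φ.repr (p t) k‖ ^ 2 :=
    Summable.of_nonneg_of_le (fun k => sq_nonneg _) key (hsummable.mul_left _)
  have htsum : ∑' k, ‖φ.repr (p t) k‖ ^ 2 ≤ 2 * m ^ 2 * (C * ‖y0‖ ^ 2) := by
    calc ∑' k, ‖φ.repr (p t) k‖ ^ 2
        ≤ ∑' k, 2 * m ^ 2 * (‖u k‖ ^ 2 + ‖Complex.exp (δp k * T)‖ ^ 2 * ‖v k‖ ^ 2) :=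
          Summable.tsum_le_tsum key hsumlhs (hsummable.mul_left _)
      _ = 2 * m ^ 2 * ∑' k, (‖u k‖ ^ 2 + ‖Complex.exp (δp k * T)‖ ^ 2 * ‖v k‖ ^ 2) :=
          tsum_mul_left
      _ ≤ 2 * m ^ 2 * (C * ‖y0‖ ^ 2) := by
          apply mul_le_mul_of_nonneg_left hsum (by positivity)
  have hCy : 0 ≤ C * ‖y0‖ ^ 2 := by
    refine le_trans ?_ hsum
    exact tsum_nonneg fun k => by positivity
  obtain ⟨M, hM⟩ : ∃ M, M = (a + b) * (2 * Real.sqrt C) * ‖y0‖ := ⟨_, rfl⟩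
  have hM0 : 0 ≤ M := by rw [hM]; positivity
  have hbound : 2 * m ^ 2 * (C * ‖y0‖ ^ 2) ≤ M ^ 2 := by
    rcases le_or_gt 0 C with hC | hC
    · have hsq : Real.sqrt C ^ 2 = C := Real.sq_sqrt hC
      have hM2 : M ^ 2 = (a + b) ^ 2 * (4 * Real.sqrt C ^ 2) * ‖y0‖ ^ 2 := by
        rw [hM]; ring
      rw [hsq] at hM2
      have h1 : m ^ 2 ≤ (a + b) ^ 2 := pow_le_pow_left₀ hm0.le hmab 2
      have h2 : 2 * m ^ 2 * (C * ‖y0‖ ^ 2) ≤ (a + b) ^ 2 * 4 * (C * ‖y0‖ ^ 2) :=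
        mul_le_mul_of_nonneg_right (by nlinarith [sq_nonneg (a + b)]) hCy
      rw [hM2]; linarith [h2]
    · have hy : ‖y0‖ = 0 := by
        by_contra hy
        have hpos : 0 < ‖y0‖ ^ 2 :=
          pow_pos (lt_of_le_of_ne (norm_nonneg _) (Ne.symm hy)) 2
        nlinarith [mul_neg_of_neg_of_pos hC hpos]
      rw [hM, hy]
      norm_num
  -- conclude via the l2 norm
  have hnorm : ‖p t‖ = ‖φ.repr (p t)‖ := (φ.repr.norm_map (p t)).symm
  rw [hnorm, show (a + b) * (2 * Real.sqrt C) * ‖y0‖ = M from hM.symm]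
  refine lp.norm_le_of_tsum_le (p := 2) (by norm_num) hM0 ?_
  have h2e : (2 : ENNReal).toReal = (2 : ℝ) := by norm_num
  rw [h2e]
  have hr : ∀ x : ℝ, 0 ≤ x → x ^ (2 : ℝ) = x ^ 2 := fun x hx => by
    rw [← Real.rpow_natCast x 2]; norm_num
  calc ∑' k, ‖φ.repr (p t) k‖ ^ (2 : ℝ)
      = ∑' k, ‖φ.repr (p t) k‖ ^ 2 := tsum_congr fun k => hr _ (norm_nonneg _)
    _ ≤ M ^ 2 := le_trans htsum hbound
    _ = M ^ (2 : ℝ) := (hr M hM0).symm
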